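/- Let H be a complex Hilbert space and let M and N be von Neumann algebras on H (unital *-subalgebras of B(H) equal to their own double commutants) with N ⊆ M. Suppose Ω ∈ H is cyclic and separating for M, E : M → M is a linear map with range contained in N satisfying E(1) = 1 and E(b a) = b E(a) for all b ∈ N and a ∈ M, and e : H → H is a bounded linear operator with e(aΩ) = E(a)Ω for all a ∈ M. Then the commutant of N equals the double commutant of the set {e} ∪ M′, i.e. N′ = ({e} ∪ M′)″. -/

import Mathlib

/-- **Jones's basic construction via commutants.**
For von Neumann algebras `N ⊆ M` on `H` with a cyclic separating vector `Ω` for `M`,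
a conditional-expectation-type map `E : M → M` onto `N` and the associated Jones
projection `e` (with `e (a Ω) = E a Ω`), the commutant of `N` equals the double
commutant of `{e} ∪ M′`. -/
theorem stmt_1
    {H : Type*} [NormedAddCommGroup H] [InnerProductSpace ℂ H] [CompleteSpace H]
    (M N : VonNeumannAlgebra H)
    (hNM : (N : Set (H →L[ℂ] H)) ⊆ (M : Set (H →L[ℂ] H)))
    (Ω : H)
    (hcyclic : Dense ((Submodule.span ℂ
      (Set.range fun a : M.toStarSubalgebra => (a : H →L[ℂ] H) Ω) : Submodule ℂ H) : Set H))
    (hseparating : ∀ a : M.toStarSubalgebra, (a : H →L[ℂ] H) Ω = 0 → a = 0)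
    (E : M.toStarSubalgebra →ₗ[ℂ] M.toStarSubalgebra)
    (hrange : ∀ a : M.toStarSubalgebra, (↑(E a) : H →L[ℂ] H) ∈ N)
    (hunit : E 1 = 1)
    (hmod : ∀ b a : M.toStarSubalgebra, (↑b : H →L[ℂ] H) ∈ N → E (b * a) = b * E a)
    (e : H →L[ℂ] H)
    (he : ∀ a : M.toStarSubalgebra, e ((a : H →L[ℂ] H) Ω) = (↑(E a) : H →L[ℂ] H) Ω) :
    Set.centralizer (N : Set (H →L[ℂ] H)) =
      Set.centralizer (Set.centralizer
        ({e} ∪ Set.centralizer (M : Set (H →L[ℂ] H)))) := by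
  set S : Set (H →L[ℂ] H) := {e} ∪ Set.centralizer (M : Set (H →L[ℂ] H)) with hS
  -- e commutes with every element of N
  have hecomm : ∀ b ∈ (N : Set (H →L[ℂ] H)), b * e = e * b := by
    intro b hb
    have hbM : b ∈ (M : Set (H →L[ℂ] H)) := hNM hb
    set c : M.toStarSubalgebra := ⟨b, hbM⟩ with hc
    have heq : ∀ a : M.toStarSubalgebra, (b * e) ((a : H →L[ℂ] H) Ω) = (e * b) ((a : H →L[ℂ] H) Ω) := by
      intro a
      have h1 : (e * b) ((a : H →L[ℂ] H) Ω) = e (((c * a : M.toStarSubalgebra) : H →L[ℂ] H) Ω) := by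
        simp [ContinuousLinearMap.mul_apply, hc]
      rw [h1, he (c * a), hmod c a hb]
      simp [ContinuousLinearMap.mul_apply, he a, hc]
    have hfun : ⇑(b * e : H →L[ℂ] H) = ⇑(e * b : H →L[ℂ] H) := by
      apply Continuous.ext_on hcyclic (b * e).continuous (e * b).continuous
      intro x hx
      induction hx using Submodule.span_induction with
      | mem x hx => obtain ⟨a, rfl⟩ := hx; exact heq a
      | zero => simp
      | add x y _ _ hx hy => simp [map_add, hx, hy]
      | smul r x _ hx => simp [map_smul, hx]
    exact ContinuousLinearMap.ext fun x => congrFun hfun x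
  -- S' ⊆ N
  have hS'N : Set.centralizer S ⊆ (N : Set (H →L[ℂ] H)) := by
    intro x hx
    have hxM : x ∈ (M : Set (H →L[ℂ] H)) := by
      rw [← M.centralizer_centralizer]
      intro m hm
      exact hx m (Or.inr hm)
    set a : M.toStarSubalgebra := ⟨x, hxM⟩ with ha
    have hex : e * x = x * e := hx e (Or.inl rfl)
    have heΩ : e Ω = Ω := by
      have := he 1
      rw [hunit] at this
      simpa using this
    have hxΩ : (a : H →L[ℂ] H) Ω = (↑(E a) : H →L[ℂ] H) Ω := by
      have h1 : e (x Ω) = x (e Ω) := by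
        have := congrArg (fun f : H →L[ℂ] H => f Ω) hex
        simpa [ContinuousLinearMap.mul_apply] using this
      have h2 : e (x Ω) = x Ω := by rw [h1, heΩ]
      rw [← h2]
      exact he a
    have : a = E a := by
      have h0 : ((a - E a : M.toStarSubalgebra) : H →L[ℂ] H) Ω = 0 := by
        have : ((a - E a : M.toStarSubalgebra) : H →L[ℂ] H) = (a : H →L[ℂ] H) - (↑(E a) : H →L[ℂ] H) := rfl
        rw [this]
        simp [ContinuousLinearMap.sub_apply, hxΩ]
      have := hseparating _ h0
      exact sub_eq_zero.mp this
    have : x = (↑(E a) : H →L[ℂ] H) := congrArg (Subtype.val) this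
    rw [this]
    exact hrange a
  -- N ⊆ S'
  have hNS' : (N : Set (H →L[ℂ] H)) ⊆ Set.centralizer S := by
    intro b hb s hs
    rcases hs with hs | hs
    · rw [Set.mem_singleton_iff] at hs; subst hs
      exact (hecomm b hb).symm
    · exact (hs b (hNM hb)).symm
  apply Set.Subset.antisymm
  · intro y hy x hx
    exact hy x (hS'N hx)
  · have := Set.centralizer_subset hNS'
    exact this
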